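/- For an infinite set X ⊆ ω, the function d_X on ω×ω defined by d_X(x,y) = 0 if x = y, d_X(x,y) = |2^{−x} − 2^{−y}| if x ≠ y and both x, y ∈ X, and d_X(x,y) = 1 otherwise, is a metric on ω, and for B ⊆ ω one has inf{d_X(b, c) : b ∈ B, c ∈ ω∖B} > 0 if and only if X∖B is finite or X∩B is finite. -/

import Mathlib

/-- `d` is a metric on `α`. -/
def IsMetricOn {α : Type*} (d : α → α → ℝ) : Prop :=
  (∀ x y, d x y = 0 ↔ x = y) ∧ (∀ x y, d x y = d y x) ∧
    ∀ x y z, d x z ≤ d x y + d y z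

open Classical in
/-- The metric `d_X` associated to `X ⊆ ω`. -/
noncomputable def dX (X : Set ℕ) (x y : ℕ) : ℝ :=
  if x = y then 0
  else if x ∈ X ∧ y ∈ X then |(2:ℝ) ^ (-(x:ℤ)) - (2:ℝ) ^ (-(y:ℤ))|
  else 1

lemma tz_pos (k : ℕ) : (0:ℝ) < 2 ^ (-(k:ℤ)) := zpow_pos (by norm_num) _

lemma tz_le_one (k : ℕ) : (2:ℝ) ^ (-(k:ℤ)) ≤ 1 := by
  have h := zpow_le_zpow_right₀ (by norm_num : (1:ℝ) ≤ 2) (by omega : -(k:ℤ) ≤ 0)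
  simpa using h

lemma tz_mono {m n : ℕ} (h : m ≤ n) : (2:ℝ) ^ (-(n:ℤ)) ≤ (2:ℝ) ^ (-(m:ℤ)) :=
  zpow_le_zpow_right₀ (by norm_num) (by omega)

lemma tz_inj {m n : ℕ} (h : (2:ℝ) ^ (-(m:ℤ)) = (2:ℝ) ^ (-(n:ℤ))) : m = n := by
  by_contra hne
  rcases Nat.lt_or_ge m n with hlt | hge
  · have := zpow_lt_zpow_right₀ (by norm_num : (1:ℝ) < 2) (by omega : -(n:ℤ) < -(m:ℤ))
    linarith
  · have hlt : n < m := by omega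
    have := zpow_lt_zpow_right₀ (by norm_num : (1:ℝ) < 2) (by omega : -(m:ℤ) < -(n:ℤ))
    linarith

lemma tz_half (m : ℕ) : (2:ℝ) ^ (-(m:ℤ) - 1) = (2:ℝ) ^ (-(m:ℤ)) / 2 := by
  rw [zpow_sub₀ (by norm_num : (2:ℝ) ≠ 0)]
  norm_num

/-- Lower bound for the distance between distinct points. -/
lemma tz_gap {m n : ℕ} (h : m ≠ n) :
    (2:ℝ) ^ (-((min m n : ℕ) : ℤ) - 1) ≤ |(2:ℝ) ^ (-(m:ℤ)) - (2:ℝ) ^ (-(n:ℤ))| := by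
  wlog hlt : m < n generalizing m n
  · have := this h.symm (by omega)
    rwa [min_comm, abs_sub_comm] at this
  have hmin : min m n = m := by omega
  rw [hmin]
  have h1 : (2:ℝ) ^ (-(n:ℤ)) ≤ (2:ℝ) ^ (-(m:ℤ) - 1) :=
    zpow_le_zpow_right₀ (by norm_num) (by omega)
  have h2 := tz_half m
  have h3 : (2:ℝ) ^ (-(n:ℤ)) < (2:ℝ) ^ (-(m:ℤ)) :=
    zpow_lt_zpow_right₀ (by norm_num) (by omega)
  rw [abs_of_pos (by linarith)]
  linarith

/-- Upper bound for the distance. -/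
lemma tz_ub (m n : ℕ) :
    |(2:ℝ) ^ (-(m:ℤ)) - (2:ℝ) ^ (-(n:ℤ))| ≤ (2:ℝ) ^ (-((min m n : ℕ) : ℤ)) := by
  have hm := tz_pos m
  have hn := tz_pos n
  have h1 : (2:ℝ) ^ (-(m:ℤ)) ≤ (2:ℝ) ^ (-((min m n : ℕ) : ℤ)) := tz_mono (min_le_left _ _)
  have h2 : (2:ℝ) ^ (-(n:ℤ)) ≤ (2:ℝ) ^ (-((min m n : ℕ) : ℤ)) := tz_mono (min_le_right _ _)
  rw [abs_le]
  constructor <;> linarith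

lemma dX_of_mem {X : Set ℕ} {x y : ℕ} (h : x ≠ y) (hx : x ∈ X) (hy : y ∈ X) :
    dX X x y = |(2:ℝ) ^ (-(x:ℤ)) - (2:ℝ) ^ (-(y:ℤ))| := by
  unfold dX; rw [if_neg h, if_pos ⟨hx, hy⟩]

lemma dX_of_not {X : Set ℕ} {x y : ℕ} (h : x ≠ y) (hxy : ¬(x ∈ X ∧ y ∈ X)) :
    dX X x y = 1 := by
  unfold dX; rw [if_neg h, if_neg hxy]

lemma dX_self (X : Set ℕ) (x : ℕ) : dX X x x = 0 := by unfold dX; rw [if_pos rfl]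

lemma dX_nonneg (X : Set ℕ) (x y : ℕ) : 0 ≤ dX X x y := by
  unfold dX
  split
  · exact le_refl 0
  · split
    · exact abs_nonneg _
    · exact zero_le_one

lemma dX_le_one (X : Set ℕ) (x y : ℕ) : dX X x y ≤ 1 := by
  unfold dX
  split
  · exact zero_le_one
  · split
    · calc |(2:ℝ) ^ (-(x:ℤ)) - (2:ℝ) ^ (-(y:ℤ))| ≤ (2:ℝ) ^ (-((min x y : ℕ) : ℤ)) := tz_ub x y
        _ ≤ 1 := tz_le_one _
    · exact le_refl 1

/-- For infinite `X ⊆ ω`, `d_X` is a metric on `ω`, and for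
`B ⊆ ω`, `d_X(B, ω∖B) > 0` iff `X∖B` is finite or `X∩B` is finite. -/
theorem stmt12 (X : Set ℕ) (hX : X.Infinite) :
    IsMetricOn (dX X) ∧
    ∀ B : Set ℕ,
      ((∃ ε > (0:ℝ), ∀ b ∈ B, ∀ c ∉ B, ε ≤ dX X b c) ↔
        (X \ B).Finite ∨ (X ∩ B).Finite) := by
  constructor
  · refine ⟨?_, ?_, ?_⟩
    · -- zero iff
      intro x y
      constructor
      · intro h
        by_contra hne
        by_cases hxy : x ∈ X ∧ y ∈ X
        · rw [dX_of_mem hne hxy.1 hxy.2] at h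
          have := tz_inj (sub_eq_zero.mp (abs_eq_zero.mp h))
          exact hne this
        · rw [dX_of_not hne hxy] at h
          norm_num at h
      · rintro rfl; exact dX_self X x
    · -- symmetry
      intro x y
      by_cases h : x = y
      · subst h; rfl
      · by_cases hxy : x ∈ X ∧ y ∈ X
        · rw [dX_of_mem h hxy.1 hxy.2, dX_of_mem (Ne.symm h) hxy.2 hxy.1, abs_sub_comm]
        · rw [dX_of_not h hxy, dX_of_not (Ne.symm h) (fun hc => hxy ⟨hc.2, hc.1⟩)]
    · -- triangle
      intro x y z
      by_cases hxz : x = z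
      · subst hxz
        rw [dX_self]
        exact add_nonneg (dX_nonneg X x y) (dX_nonneg X y x)
      by_cases hxy : x = y
      · subst hxy; rw [dX_self]; linarith [dX_nonneg X x x]
      by_cases hyz : y = z
      · subst hyz; rw [dX_self]; linarith [dX_nonneg X y y]
      by_cases hx : x ∈ X ∧ z ∈ X
      · rw [dX_of_mem hxz hx.1 hx.2]
        by_cases hy : y ∈ X
        · rw [dX_of_mem hxy hx.1 hy, dX_of_mem hyz hy hx.2]
          exact abs_sub_le _ _ _
        · rw [dX_of_not hxy (fun hc => hy hc.2)]
          have h1 : |(2:ℝ) ^ (-(x:ℤ)) - (2:ℝ) ^ (-(z:ℤ))| ≤ 1 := by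
            calc _ ≤ (2:ℝ) ^ (-((min x z : ℕ) : ℤ)) := tz_ub x z
              _ ≤ 1 := tz_le_one _
          linarith [dX_nonneg X y z]
      · push_neg at hx
        by_cases hxX : x ∈ X
        · have hz := hx hxX
          rw [dX_of_not hyz (fun hc => hz hc.2)]
          linarith [dX_le_one X x z, dX_nonneg X x y]
        · rw [dX_of_not hxy (fun hc => hxX hc.1)]
          linarith [dX_le_one X x z, dX_nonneg X y z]
  · intro B
    constructor
    · -- forward, by contradiction
      rintro ⟨ε, hε, hsep⟩
      by_contra h
      push_neg at h
      obtain ⟨h1, h2⟩ := h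
      obtain ⟨n, hn⟩ := exists_pow_lt_of_lt_one hε (by norm_num : (1:ℝ)/2 < 1)
      obtain ⟨b, hb, hbn⟩ := h2.exists_gt n
      obtain ⟨c, hc, hcn⟩ := h1.exists_gt n
      have hbc : b ≠ c := fun h => hc.2 (h ▸ hb.2)
      have hle := hsep b hb.2 c hc.2
      rw [dX_of_mem hbc hb.1 hc.1] at hle
      have h3 : |(2:ℝ) ^ (-(b:ℤ)) - (2:ℝ) ^ (-(c:ℤ))| ≤ (2:ℝ) ^ (-((min b c : ℕ) : ℤ)) := tz_ub b c
      have h4 : (2:ℝ) ^ (-((min b c : ℕ) : ℤ)) ≤ (2:ℝ) ^ (-(n:ℤ)) := tz_mono (by omega)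
      have h5 : (2:ℝ) ^ (-(n:ℤ)) = (1/2:ℝ)^n := by
        rw [zpow_neg, zpow_natCast, one_div, inv_pow]
      linarith
    · -- backward
      intro h
      have key : ∀ N : ℕ, (∀ b ∈ B, ∀ c ∉ B, b ∈ X → c ∈ X → min b c ≤ N) →
          ∃ ε > (0:ℝ), ∀ b ∈ B, ∀ c ∉ B, ε ≤ dX X b c := by
        intro N hN
        refine ⟨(2:ℝ) ^ (-(N:ℤ) - 1), by positivity, ?_⟩
        intro b hb c hc
        have hbc : b ≠ c := fun h => hc (h ▸ hb)
        by_cases hm : b ∈ X ∧ c ∈ X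
        · rw [dX_of_mem hbc hm.1 hm.2]
          have h1 := tz_gap hbc
          have h2 : (2:ℝ) ^ (-(N:ℤ) - 1) ≤ (2:ℝ) ^ (-((min b c : ℕ) : ℤ) - 1) :=
            zpow_le_zpow_right₀ (by norm_num) (by
              have := hN b hb c hc hm.1 hm.2; omega)
          linarith
        · rw [dX_of_not hbc hm]
          calc (2:ℝ) ^ (-(N:ℤ) - 1) ≤ (2:ℝ) ^ (0:ℤ) :=
                zpow_le_zpow_right₀ (by norm_num) (by omega)
            _ = 1 := by norm_num
      rcases h with hfin | hfin
      · obtain ⟨N, hN⟩ := hfin.bddAbove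
        exact key N (fun b hb c hc hbX hcX => le_trans (min_le_right _ _) (hN ⟨hcX, hc⟩))
      · obtain ⟨N, hN⟩ := hfin.bddAbove
        exact key N (fun b hb c hc hbX hcX => le_trans (min_le_left _ _) (hN ⟨hbX, hb⟩))
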